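/- arXiv:1303.3545 — 5 statements merged into one kernel-verified Lean document; each statement's English description precedes it below -/
import Mathlib

section
/- For every real number r > 1, the series ∑_{l≥0} ((l-1)/((l+2)(2l+1))) r^{-2l-2} converges and equals -1 - r^2 log((r^2-1)/r^2) - (1/(2r)) log((r+1)/(r-1)). -/
open Real

theorem sum_sub_one_div_mul (r : ℝ) (hr : 1 < r) :
    HasSum (fun l : ℕ => (((l : ℝ) - 1) / (((l : ℝ) + 2) * (2 * (l : ℝ) + 1))) * (r ^ (2 * l + 2))⁻¹)
      (-1 - r ^ 2 * Real.log ((r ^ 2 - 1) / r ^ 2)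
        - (1 / (2 * r)) * Real.log ((r + 1) / (r - 1))) := by
  have hr0 : (0 : ℝ) < r := lt_trans one_pos hr
  have hrne : r ≠ 0 := ne_of_gt hr0
  set x : ℝ := r⁻¹ ^ 2 with hx
  have hxabs : |x| < 1 := by
    rw [hx, abs_of_pos (by positivity)]
    have : r⁻¹ < 1 := inv_lt_one_of_one_lt₀ hr
    nlinarith [inv_pos.mpr hr0]
  have hyabs : |r⁻¹| < 1 := by
    rw [abs_of_pos (inv_pos.mpr hr0)]
    exact inv_lt_one_of_one_lt₀ hr
  -- First series: A l = x^(l+1)/(l+2)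
  have hlog := hasSum_pow_div_log_of_abs_lt_one hxabs
  have hA1 : HasSum (fun l : ℕ => x ^ (l + 1 + 1) / ((l : ℝ) + 1 + 1))
      (-Real.log (1 - x) - x) := by
    have heq : (fun l : ℕ => x ^ (l + 1 + 1) / ((l : ℝ) + 1 + 1))
        = fun l : ℕ => x ^ ((l + 1) + 1) / ((↑(l + 1) : ℝ) + 1) := by
      ext l; push_cast; ring_nf
    rw [heq, hasSum_nat_add_iff (f := fun n : ℕ => x ^ (n + 1) / ((n : ℝ) + 1)) 1]
    convert hlog using 1
    · rfl
    simp
  have hA : HasSum (fun l : ℕ => x⁻¹ * (x ^ (l + 1 + 1) / ((l : ℝ) + 1 + 1)))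
      (x⁻¹ * (-Real.log (1 - x) - x)) := hA1.mul_left _
  -- Second series
  have hB0 := hasSum_log_sub_log_of_abs_lt_one hyabs
  have hB : HasSum (fun k : ℕ => (1 / (2 * r)) * ((2 : ℝ) * (1 / (2 * (k : ℝ) + 1)) * r⁻¹ ^ (2 * k + 1)))
      ((1 / (2 * r)) * (Real.log (1 + r⁻¹) - Real.log (1 - r⁻¹))) := hB0.mul_left _
  have key := hA.sub hB
  have hterm : ∀ l : ℕ,
      x⁻¹ * (x ^ (l + 1 + 1) / ((l : ℝ) + 1 + 1))
        - (1 / (2 * r)) * ((2 : ℝ) * (1 / (2 * (l : ℝ) + 1)) * r⁻¹ ^ (2 * l + 1))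
      = (((l : ℝ) - 1) / (((l : ℝ) + 2) * (2 * (l : ℝ) + 1))) * (r ^ (2 * l + 2))⁻¹ := by
    intro l
    have h1 : ((l : ℝ) + 1 + 1) ≠ 0 := by positivity
    have h2 : (2 * (l : ℝ) + 1) ≠ 0 := by positivity
    have hxne : x ≠ 0 := by positivity
    have hpow : x ^ (l + 1 + 1) = (r ^ (2 * l + 2))⁻¹ * x := by
      rw [hx, ← pow_mul, show 2 * (l + 1 + 1) = (2 * l + 2) + 2 by ring, pow_add, inv_pow]
    have hpow2 : r⁻¹ ^ (2 * l + 1) = (r ^ (2 * l + 2))⁻¹ * r := by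
      rw [inv_pow, show 2 * l + 2 = 2 * l + 1 + 1 from rfl, pow_succ r (2 * l + 1), mul_inv,
        mul_assoc, inv_mul_cancel₀ hrne, mul_one]
    rw [hpow, hpow2]
    field_simp
    ring
  rw [funext hterm] at key
  convert key using 1
  · rfl
  have hlog1 : (1 : ℝ) - x = (r ^ 2 - 1) / r ^ 2 := by
    rw [hx]; field_simp
  have hlog2 : Real.log (1 + r⁻¹) - Real.log (1 - r⁻¹) = Real.log ((r + 1) / (r - 1)) := by
    rw [← Real.log_div (by positivity) (by nlinarith [inv_lt_one_of_one_lt₀ hr])]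
    congr 1
    field_simp
  rw [hlog1, hlog2, hx]
  field_simp
  ring
end

section
/- For every real number r > 1, the quantity 32 r^2 log((r^2-1)/r^2) + (15 r + 1/r) log((r+1)/(r-1)) + 2 (r^2+1)/(r^2-1) is strictly positive. -/
open Finset


lemma log_one_sub_bound {x : ℝ} (hx : 0 ≤ x) (hx1 : x < 1) :
    Real.log (1 - x) ≥
      -(x + x^2/2 + x^3/3 + x^4/4 + x^5/5 + x^6/6 + x^7/7 + x^8/8)
        - x^9 / (9 * (1 - x)) := by
  have habs : |x| < 1 := by rwa [abs_of_nonneg hx]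
  have hs := Real.hasSum_pow_div_log_of_abs_lt_one habs
  have hsum := hs.summable
  have htsum : ∑' n : ℕ, x ^ (n + 1) / (n + 1) = -Real.log (1 - x) := hs.tsum_eq
  have hsplit := Summable.sum_add_tsum_nat_add (f := fun n : ℕ => x ^ (n + 1) / (n + 1)) 8 hsum
  have hg : Summable (fun n : ℕ => x ^ 9 / 9 * x ^ n) :=
    (summable_geometric_of_lt_one hx hx1).mul_left _
  have hshift : Summable (fun n : ℕ => x ^ (n + 8 + 1) / ((n + 8 : ℕ) + 1)) :=
    (summable_nat_add_iff 8).2 hsum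
  have hterm : ∀ n : ℕ, x ^ (n + 8 + 1) / ((n + 8 : ℕ) + 1) ≤ x ^ 9 / 9 * x ^ n := by
    intro n
    have h1 : (9 : ℝ) ≤ ((n + 8 : ℕ) : ℝ) + 1 := by push_cast; linarith [Nat.cast_nonneg (α := ℝ) n]
    have hp : 0 ≤ x ^ (n + 8 + 1) := pow_nonneg hx _
    have h2 : x ^ (n + 8 + 1) / (((n + 8 : ℕ) : ℝ) + 1) ≤ x ^ (n + 8 + 1) / 9 :=
      div_le_div_of_nonneg_left hp (by norm_num) h1
    calc x ^ (n + 8 + 1) / (((n + 8 : ℕ) : ℝ) + 1) ≤ x ^ (n + 8 + 1) / 9 := h2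
      _ = x ^ 9 / 9 * x ^ n := by ring
  have htail : (∑' n : ℕ, x ^ (n + 8 + 1) / ((n + 8 : ℕ) + 1)) ≤ ∑' n : ℕ, x ^ 9 / 9 * x ^ n :=
    Summable.tsum_le_tsum hterm hshift hg
  have hgeo : ∑' n : ℕ, x ^ 9 / 9 * x ^ n = x ^ 9 / 9 * (1 - x)⁻¹ := by
    rw [tsum_mul_left, tsum_geometric_of_lt_one hx hx1]
  have hpart : ∑ i ∈ range 8, x ^ (i + 1) / ((i : ℝ) + 1)
      = x + x^2/2 + x^3/3 + x^4/4 + x^5/5 + x^6/6 + x^7/7 + x^8/8 := by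
    simp [Finset.sum_range_succ]
    norm_num
  have h1x : (0:ℝ) < 1 - x := by linarith
  have hx9 : x ^ 9 / 9 * (1 - x)⁻¹ = x ^ 9 / (9 * (1 - x)) := by
    field_simp
  rw [htsum, hpart] at hsplit
  have h2 : (∑' n : ℕ, x ^ (n + 8 + 1) / ((n + 8 : ℕ) + 1)) ≤ x ^ 9 / (9 * (1 - x)) := by
    rw [← hx9]; exact htail.trans_eq hgeo
  linarith


lemma log_ratio_bound {t : ℝ} (ht : 0 ≤ t) (ht1 : t < 1) :
    Real.log ((1 + t) / (1 - t)) ≥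
      2*(t + t^3/3 + t^5/5 + t^7/7 + t^9/9 + t^11/11 + t^13/13 + t^15/15 + t^17/17) := by
  have habs : |t| < 1 := by rwa [abs_of_nonneg ht]
  have hs := Real.hasSum_log_sub_log_of_abs_lt_one habs
  have hnn : ∀ k : ℕ, k ∉ range 9 → 0 ≤ (2:ℝ) * (1 / (2 * k + 1)) * t ^ (2 * k + 1) := by
    intro k _
    have h1 : (0:ℝ) < 2 * k + 1 := by positivity
    positivity
  have hlb := sum_le_hasSum (range 9) hnn hs
  have hlog : Real.log ((1 + t) / (1 - t)) = Real.log (1 + t) - Real.log (1 - t) :=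
    Real.log_div (by linarith) (ne_of_gt (by linarith))
  rw [ge_iff_le, hlog]
  refine le_trans (le_of_eq ?_) hlb
  simp [Finset.sum_range_succ]
  norm_num
  ring

lemma Gpos {x : ℝ} (hx : 0 < x) (hx1 : x < 1) :
    0 < 24/35*x^3 + 8/15*x^4 + 1376/3465*x^5 + 2720/9009*x^6 + 236/1001*x^7
        + 1876/9945*x^8 - 454/255*x^9 - 2/17*x^10 := by
  have h1x : (0:ℝ) < 1 - x := by linarith
  have hid : 24/35*x^3 + 8/15*x^4 + 1376/3465*x^5 + 2720/9009*x^6 + 236/1001*x^7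
        + 1876/9945*x^8 - 454/255*x^9 - 2/17*x^10
      = x^3 * (4/9 + 76/315*(1-x)^7 + 20/9*x*(1-x)^6 + 6004/693*x^2*(1-x)^5
          + 8036/429*x^3*(1-x)^4 + 220952/9009*x^4*(1-x)^3 + 5040076/255255*x^5*(1-x)^2
          + 269342/36465*x^6*(1-x)) := by ring
  rw [hid]
  apply mul_pos (by positivity)
  have a1 : (0:ℝ) ≤ 76/315*(1-x)^7 :=
    mul_nonneg (by norm_num) (pow_nonneg h1x.le 7)
  have a2 : (0:ℝ) ≤ 20/9*x*(1-x)^6 :=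
    mul_nonneg (mul_nonneg (by norm_num) hx.le) (pow_nonneg h1x.le 6)
  have a3 : (0:ℝ) ≤ 6004/693*x^2*(1-x)^5 :=
    mul_nonneg (mul_nonneg (by norm_num) (pow_nonneg hx.le 2)) (pow_nonneg h1x.le 5)
  have a4 : (0:ℝ) ≤ 8036/429*x^3*(1-x)^4 :=
    mul_nonneg (mul_nonneg (by norm_num) (pow_nonneg hx.le 3)) (pow_nonneg h1x.le 4)
  have a5 : (0:ℝ) ≤ 220952/9009*x^4*(1-x)^3 :=
    mul_nonneg (mul_nonneg (by norm_num) (pow_nonneg hx.le 4)) (pow_nonneg h1x.le 3)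
  have a6 : (0:ℝ) ≤ 5040076/255255*x^5*(1-x)^2 :=
    mul_nonneg (mul_nonneg (by norm_num) (pow_nonneg hx.le 5)) (pow_nonneg h1x.le 2)
  have a7 : (0:ℝ) ≤ 269342/36465*x^6*(1-x) :=
    mul_nonneg (mul_nonneg (by norm_num) (pow_nonneg hx.le 6)) h1x.le
  linarith

set_option maxHeartbeats 1000000 in
lemma key_ineq {t : ℝ} (ht : 0 < t) (ht1 : t < 1) :
    0 < 32/t^2 * Real.log (1 - t^2) + (15/t + t) * Real.log ((1 + t)/(1 - t))
        + 2*(1 + t^2)/(1 - t^2) := by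
  have hx : 0 < t^2 := by positivity
  have hx1 : t^2 < 1 := by nlinarith
  have h1x : (0:ℝ) < 1 - t^2 := by linarith
  have hA := log_one_sub_bound hx.le hx1
  have hB := log_ratio_bound ht.le ht1
  have c1 : (0:ℝ) < 32/t^2 := by positivity
  have c2 : (0:ℝ) < 15/t + t := by positivity
  have m1 : 32/t^2 * (-((t^2) + (t^2)^2/2 + (t^2)^3/3 + (t^2)^4/4 + (t^2)^5/5 + (t^2)^6/6
        + (t^2)^7/7 + (t^2)^8/8) - (t^2)^9 / (9 * (1 - t^2)))
      ≤ 32/t^2 * Real.log (1 - t^2) := mul_le_mul_of_nonneg_left hA c1.le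
  have m2 : (15/t + t) * (2*(t + t^3/3 + t^5/5 + t^7/7 + t^9/9 + t^11/11 + t^13/13
        + t^15/15 + t^17/17))
      ≤ (15/t + t) * Real.log ((1 + t)/(1 - t)) := mul_le_mul_of_nonneg_left hB c2.le
  have hG := Gpos hx hx1
  have ht0 : t ≠ 0 := ne_of_gt ht
  have h1x0 : (1:ℝ) - t^2 ≠ 0 := ne_of_gt h1x
  have hrat : 32/t^2 * (-((t^2) + (t^2)^2/2 + (t^2)^3/3 + (t^2)^4/4 + (t^2)^5/5 + (t^2)^6/6
        + (t^2)^7/7 + (t^2)^8/8) - (t^2)^9 / (9 * (1 - t^2)))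
      + (15/t + t) * (2*(t + t^3/3 + t^5/5 + t^7/7 + t^9/9 + t^11/11 + t^13/13
        + t^15/15 + t^17/17))
      + 2*(1 + t^2)/(1 - t^2)
      = (24/35*(t^2)^3 + 8/15*(t^2)^4 + 1376/3465*(t^2)^5 + 2720/9009*(t^2)^6
          + 236/1001*(t^2)^7 + 1876/9945*(t^2)^8 - 454/255*(t^2)^9 - 2/17*(t^2)^10)
        / (1 - t^2) := by
    field_simp
    ring
  have hpos := hrat ▸ div_pos hG h1x
  linarith [hrat.symm ▸ div_pos hG h1x, m1, m2]

theorem radial_expression_pos (r : ℝ) (hr : 1 < r) :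
    0 < 32 * r ^ 2 * Real.log ((r ^ 2 - 1) / r ^ 2)
        + (15 * r + 1 / r) * Real.log ((r + 1) / (r - 1))
        + 2 * (r ^ 2 + 1) / (r ^ 2 - 1) := by
  have hr0 : (0:ℝ) < r := by linarith
  have hrne : r ≠ 0 := ne_of_gt hr0
  have ht : 0 < 1/r := by positivity
  have ht1 : 1/r < 1 := by rw [div_lt_one hr0]; linarith
  have h := key_ineq ht ht1
  have hr1 : r - 1 ≠ 0 := ne_of_gt (by linarith)
  have hden : r^2 - 1 ≠ 0 := by nlinarith
  have hl1 : Real.log (1 - (1/r)^2) = Real.log ((r^2 - 1)/r^2) := by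
    congr 1
    field_simp
  have hl2 : Real.log ((1 + 1/r)/(1 - 1/r)) = Real.log ((r + 1)/(r - 1)) := by
    congr 1
    rw [div_eq_div_iff (ne_of_gt (sub_pos.mpr ht1)) hr1]
    field_simp
  rw [hl1, hl2] at h
  have heq : 32/(1/r)^2 * Real.log ((r^2 - 1)/r^2)
      + (15/(1/r) + 1/r) * Real.log ((r + 1)/(r - 1))
      + 2*(1 + (1/r)^2)/(1 - (1/r)^2)
      = 32 * r ^ 2 * Real.log ((r ^ 2 - 1) / r ^ 2)
        + (15 * r + 1 / r) * Real.log ((r + 1) / (r - 1))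
        + 2 * (r ^ 2 + 1) / (r ^ 2 - 1) := by
    field_simp
  rw [heq] at h
  exact h
end

section
/- Let ξ ∈ ℝ^3 with |ξ| > 1 and λ > 0, and let B = {x ∈ ℝ^3 : |x - λξ| ≤ λ}. Then the integral of |x|^{-2} over B with respect to Lebesgue measure equals 2π λ (1 - ((|ξ|^2-1)/(2|ξ|)) log((|ξ|+1)/(|ξ|-1))). -/
open MeasureTheory Real

noncomputable abbrev E3 : Type := EuclideanSpace ℝ (Fin 3)

noncomputable abbrev E2aux : Type := EuclideanSpace ℝ (Fin 2)

lemma ftc1 (t : ℝ) (ht : 0 < t) (R : ℝ) :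
    ∫ r in (0:ℝ)..R, r * (t^2 + r^2)⁻¹
      = (1/2) * (Real.log (t^2 + R^2) - Real.log (t^2)) := by
  have h := intervalIntegral.integral_eq_sub_of_hasDerivAt
    (f := fun r : ℝ => (1/2) * Real.log (t^2 + r^2))
    (f' := fun r : ℝ => r * (t^2 + r^2)⁻¹) (a := 0) (b := R)
    (fun x _ => by
      have hpos : 0 < t^2 + x^2 := by positivity
      have h1 : HasDerivAt (fun r : ℝ => t^2 + r^2) (2*x) x := by
        simpa using ((hasDerivAt_pow 2 x).const_add (t^2))
      have h2 := ((Real.hasDerivAt_log hpos.ne').comp x h1).const_mul (1/2)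
      convert h2 using 1
      · rfl
      · rfl
      · ring)
    (by
      apply ContinuousOn.intervalIntegrable
      apply Continuous.continuousOn
      have : ∀ x : ℝ, t^2 + x^2 ≠ 0 := fun x => by positivity
      exact continuous_id.mul ((continuous_const.add (continuous_pow 2)).inv₀ this))
  rw [h]
  norm_num
  ring

lemma vol_ball_E2aux : (volume (Metric.ball (0 : E2aux) 1)).toReal = π := by
  rw [EuclideanSpace.volume_ball]
  have h1 : Real.Gamma (1+1) = 1 := by
    rw [Real.Gamma_add_one one_ne_zero, Real.Gamma_one]; norm_num
  have h2 : Real.sqrt π ^ 2 = π := Real.sq_sqrt Real.pi_nonneg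
  simp [h1, h2, ENNReal.toReal_ofReal Real.pi_nonneg]

lemma inner2 (t R : ℝ) (ht : 0 < t) (hR : 0 ≤ R) :
    ∫ w : E2aux, (if ‖w‖ ≤ R then (t^2 + ‖w‖^2)⁻¹ else 0)
      = π * (Real.log (t^2 + R^2) - Real.log (t^2)) := by
  have key := MeasureTheory.integral_fun_norm_addHaar (volume : Measure E2aux)
    (fun r : ℝ => if r ≤ R then (t^2 + r^2)⁻¹ else 0)
  have hdim : Module.finrank ℝ E2aux = 2 := finrank_euclideanSpace_fin
  rw [hdim] at key
  rw [key, measureReal_def, vol_ball_E2aux]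
  have h1 : (fun y : ℝ => y ^ (2-1) • (if y ≤ R then (t^2 + y^2)⁻¹ else 0))
      = Set.indicator (Set.Iic R) (fun y => y * (t^2+y^2)⁻¹) := by
    funext y
    by_cases h : y ≤ R <;> simp [Set.indicator, h, smul_eq_mul]
  rw [h1, MeasureTheory.setIntegral_indicator measurableSet_Iic, Set.Ioi_inter_Iic,
    ← intervalIntegral.integral_of_le hR, ftc1 t ht R]
  simp [smul_eq_mul]
  ring

lemma normsq3 (x : E3) : ‖x‖^2 = (x 0)^2 + (x 1)^2 + (x 2)^2 := by
  rw [EuclideanSpace.norm_eq, Real.sq_sqrt (by positivity)]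
  simp [Fin.sum_univ_three, sq_abs]

lemma normsq2 (w : E2aux) : ‖w‖^2 = (w 0)^2 + (w 1)^2 := by
  rw [EuclideanSpace.norm_eq, Real.sq_sqrt (by positivity)]
  simp [Fin.sum_univ_two, sq_abs]

noncomputable def Ψ : (ℝ × E2aux) ≃ᵐ E3 :=
  ((MeasurableEquiv.refl ℝ).prodCongr ((MeasurableEquiv.toLp 2 (Fin 2 → ℝ)).symm)).trans
  ((MeasurableEquiv.piFinSuccAbove (fun _ : Fin 3 => ℝ) 0).symm.trans
    ((MeasurableEquiv.toLp 2 (Fin 3 → ℝ)).symm).symm)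

lemma Ψ_apply_0 (p : ℝ × E2aux) : (Ψ p) 0 = p.1 := rfl
lemma Ψ_apply_1 (p : ℝ × E2aux) : (Ψ p) 1 = p.2 0 := rfl
lemma Ψ_apply_2 (p : ℝ × E2aux) : (Ψ p) 2 = p.2 1 := rfl

lemma Ψmp : MeasurePreserving Ψ volume volume := by
  have mp1 : MeasurePreserving
      (⇑((MeasurableEquiv.refl ℝ).prodCongr ((MeasurableEquiv.toLp 2 (Fin 2 → ℝ)).symm)))
      volume volume :=
    (MeasurePreserving.id volume).prod (EuclideanSpace.volume_preserving_symm_measurableEquiv_toLp (Fin 2))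
  have mp2 := (volume_preserving_piFinSuccAbove (fun _ : Fin 3 => ℝ) 0).symm
  have mp3 := (EuclideanSpace.volume_preserving_symm_measurableEquiv_toLp (Fin 3)).symm
  exact (mp3.comp mp2).comp mp1

lemma norm_Ψ_sub (p : ℝ × E2aux) (b : ℝ) :
    ‖Ψ p - b • EuclideanSpace.single (0 : Fin 3) (1:ℝ)‖^2 = (p.1 - b)^2 + ‖p.2‖^2 := by
  rw [normsq3, normsq2]
  simp only [PiLp.sub_apply, PiLp.smul_apply, EuclideanSpace.single_apply,
    Ψ_apply_0, Ψ_apply_1, Ψ_apply_2, smul_eq_mul]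
  norm_num [show (2:Fin 3) ≠ 0 by decide, show (1:Fin 3) ≠ 0 by decide]
  ring

lemma norm_Ψ (p : ℝ × E2aux) : ‖Ψ p‖^2 = p.1^2 + ‖p.2‖^2 := by
  have := norm_Ψ_sub p 0
  simpa using this

lemma sq_le_one_iff' {x : ℝ} (hx : 0 ≤ x) : x^2 ≤ 1 ↔ x ≤ 1 := by
  constructor
  · intro h; nlinarith
  · intro h; nlinarith

lemma integrableG (a : ℝ) (ha : 1 < a) :
    Integrable (({p : ℝ × E2aux | (p.1 - a)^2 + ‖p.2‖^2 ≤ 1}).indicator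
      (fun p : ℝ × E2aux => (p.1^2 + ‖p.2‖^2)⁻¹)) (volume : Measure (ℝ × E2aux)) := by
  set S : Set (ℝ × E2aux) := {p | (p.1 - a)^2 + ‖p.2‖^2 ≤ 1} with hSdef
  have hcont : Continuous (fun p : ℝ × E2aux => (p.1 - a)^2 + ‖p.2‖^2) := by fun_prop
  have hSmeas : MeasurableSet S := (isClosed_le hcont continuous_const).measurableSet
  have hhm : Measurable (fun p : ℝ × E2aux => (p.1^2 + ‖p.2‖^2)⁻¹) := by
    apply Measurable.inv; fun_prop
  have hSfin : volume S < ⊤ := by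
    have hsub : S ⊆ (Set.Icc (a-1) (a+1)) ×ˢ (Metric.closedBall (0:E2aux) 1) := by
      rintro ⟨t, w⟩ hp
      have hp' : (t - a)^2 + ‖w‖^2 ≤ 1 := hp
      constructor
      · have h2 : |t - a| ≤ 1 := by nlinarith [sq_abs (t-a), abs_nonneg (t-a), norm_nonneg w, sq_nonneg ‖w‖, hp']
        have h3 := abs_le.1 h2
        exact ⟨by linarith [h3.1], by linarith [h3.2]⟩
      · rw [Metric.mem_closedBall, dist_zero_right]
        nlinarith [norm_nonneg w, sq_nonneg (t-a), hp']
    refine (measure_mono hsub).trans_lt ?_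
    rw [Measure.volume_eq_prod, Measure.prod_prod]
    exact ENNReal.mul_lt_top measure_Icc_lt_top measure_closedBall_lt_top
  refine Integrable.mono' (g := S.indicator (fun _ => ((a-1)^2)⁻¹)) ?_ ?_ ?_
  · rw [integrable_indicator_iff hSmeas]
    exact integrableOn_const hSfin.ne
  · exact (hhm.indicator hSmeas).aestronglyMeasurable
  · filter_upwards with p
    by_cases hp : p ∈ S
    · rw [Set.indicator_of_mem hp, Set.indicator_of_mem hp, Real.norm_eq_abs]
      have hp1 : a - 1 ≤ p.1 := by
        have : (p.1 - a)^2 ≤ 1 := by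
          have hthis : (p.1 - a)^2 + ‖p.2‖^2 ≤ 1 := hp
          nlinarith [norm_nonneg p.2, sq_nonneg ‖p.2‖]
        nlinarith [sq_abs (p.1 - a), abs_nonneg (p.1 - a), abs_le.1 (show |p.1 - a| ≤ 1 by nlinarith [sq_abs (p.1-a), abs_nonneg (p.1-a)])]
      have hlow : (a-1)^2 ≤ p.1^2 + ‖p.2‖^2 := by nlinarith [norm_nonneg p.2, sq_nonneg ‖p.2‖]
      have hpos : (0:ℝ) < (a-1)^2 := by nlinarith
      rw [abs_of_nonneg (by positivity)]
      exact inv_anti₀ hpos hlow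
    · rw [Set.indicator_of_notMem hp, Set.indicator_of_notMem hp]
      simp

lemma ftc2 (a : ℝ) (ha : 1 < a) :
    ∫ t in (a-1)..(a+1), Real.log (2*a*t - (a^2-1))
      = (2*a)⁻¹ * ((a+1)^2 * Real.log ((a+1)^2) - (a-1)^2 * Real.log ((a-1)^2)
          - (a+1)^2 + (a-1)^2) := by
  have ha0 : (2*a) ≠ 0 := by nlinarith
  have h1 : ∀ t : ℝ, 2*a*t - (a^2-1) = 2*a*t + -(a^2-1) := fun t => by ring
  simp_rw [h1]
  rw [intervalIntegral.integral_comp_mul_add Real.log ha0 (-(a^2-1))]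
  have e1 : 2*a*(a-1) + -(a^2-1) = (a-1)^2 := by ring
  have e2 : 2*a*(a+1) + -(a^2-1) = (a+1)^2 := by ring
  have hmem : (0:ℝ) ∉ Set.uIcc ((a-1)^2) ((a+1)^2) := by
    intro h
    rw [Set.mem_uIcc] at h
    rcases h with ⟨h1, _⟩ | ⟨_, h2⟩ <;> nlinarith
  rw [e1, e2, integral_log, smul_eq_mul]

lemma main1 (a : ℝ) (ha : 1 < a) :
    ∫ x : E3, (Metric.closedBall (a • EuclideanSpace.single (0 : Fin 3) (1:ℝ)) 1).indicator
        (fun x => (‖x‖^2)⁻¹) x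
      = 2 * π * (1 - ((a^2-1)/(2*a)) * Real.log ((a+1)/(a-1))) := by
  have ha0 : 0 < a - 1 := by linarith
  set S : Set (ℝ × E2aux) := {p | (p.1 - a)^2 + ‖p.2‖^2 ≤ 1} with hS
  set h : ℝ × E2aux → ℝ := fun p => (p.1^2 + ‖p.2‖^2)⁻¹ with hh
  have hG : Integrable (S.indicator h) (volume : Measure (ℝ × E2aux)) := integrableG a ha
  rw [← Ψmp.integral_comp Ψ.measurableEmbedding]
  have hcomp : ∀ p : ℝ × E2aux,
      (Metric.closedBall (a • EuclideanSpace.single (0 : Fin 3) (1:ℝ)) 1).indicator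
        (fun x => (‖x‖^2)⁻¹) (Ψ p) = S.indicator h p := by
    intro p
    have hmem : Ψ p ∈ Metric.closedBall (a • EuclideanSpace.single (0 : Fin 3) (1:ℝ)) 1 ↔ p ∈ S := by
      rw [Metric.mem_closedBall, dist_eq_norm, ← sq_le_one_iff' (norm_nonneg _), norm_Ψ_sub]
      exact Iff.rfl
    by_cases hp : p ∈ S
    · rw [Set.indicator_of_mem (hmem.2 hp), Set.indicator_of_mem hp, norm_Ψ]
    · rw [Set.indicator_of_notMem (fun c => hp (hmem.1 c)), Set.indicator_of_notMem hp]
  simp_rw [hcomp]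
  rw [Measure.volume_eq_prod] at hG ⊢
  rw [MeasureTheory.integral_prod _ hG]
  have hJ : ∀ t : ℝ, (∫ w : E2aux, S.indicator h (t, w))
      = (Set.Icc (a-1) (a+1)).indicator
          (fun t => π * (Real.log (2*a*t - (a^2-1)) - Real.log (t^2))) t := by
    intro t
    by_cases ht : t ∈ Set.Icc (a-1) (a+1)
    · obtain ⟨ht1, ht2⟩ := ht
      have htpos : 0 < t := lt_of_lt_of_le ha0 ht1
      have hta : (t - a)^2 ≤ 1 := by nlinarith
      set R := Real.sqrt (1 - (t-a)^2) with hRdef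
      have hR0 : 0 ≤ R := Real.sqrt_nonneg _
      have hR2 : R^2 = 1 - (t-a)^2 := Real.sq_sqrt (by linarith)
      have hpt : ∀ w : E2aux, S.indicator h (t, w) = if ‖w‖ ≤ R then (t^2 + ‖w‖^2)⁻¹ else 0 := by
        intro w
        have hcond : (t, w) ∈ S ↔ ‖w‖ ≤ R := by
          have : (t - a)^2 + ‖w‖^2 ≤ 1 ↔ ‖w‖^2 ≤ R^2 := by rw [hR2]; constructor <;> intro <;> linarith
          rw [hS, Set.mem_setOf_eq, this]
          constructor
          · intro hle; nlinarith [norm_nonneg w, hR0]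
          · intro hle; nlinarith [norm_nonneg w, hR0]
        by_cases hw : (t, w) ∈ S
        · rw [Set.indicator_of_mem hw, if_pos (hcond.1 hw)]
        · rw [Set.indicator_of_notMem hw, if_neg (fun c => hw (hcond.2 c))]
      rw [Set.indicator_of_mem (Set.mem_Icc.2 ⟨ht1, ht2⟩)]
      simp_rw [hpt]
      rw [inner2 t R htpos hR0]
      have : t^2 + R^2 = 2*a*t - (a^2-1) := by rw [hR2]; ring
      rw [this]
    · rw [Set.indicator_of_notMem ht]
      have hpt : ∀ w : E2aux, S.indicator h (t, w) = 0 := by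
        intro w
        apply Set.indicator_of_notMem
        rw [hS, Set.mem_setOf_eq]
        intro hc
        have h1 : (t - a)^2 ≤ 1 := by nlinarith [norm_nonneg w, sq_nonneg ‖w‖]
        have h2 : |t - a| ≤ 1 := by nlinarith [sq_abs (t-a), abs_nonneg (t-a)]
        have h3 := abs_le.1 h2
        exact ht ⟨by linarith [h3.1], by linarith [h3.2]⟩
      simp_rw [hpt]
      exact integral_zero _ _
  simp_rw [hJ]
  rw [MeasureTheory.integral_indicator measurableSet_Icc,
    MeasureTheory.integral_Icc_eq_integral_Ioc,
    ← intervalIntegral.integral_of_le (by linarith : a - 1 ≤ a + 1)]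
  have hsplit : ∀ t : ℝ, Real.log (t^2) = 2 * Real.log t := fun t => by
    rw [Real.log_pow]; norm_num
  simp_rw [hsplit]
  have hInt1 : IntervalIntegrable (fun t => Real.log (2*a*t - (a^2-1))) volume (a-1) (a+1) := by
    apply ContinuousOn.intervalIntegrable
    apply ContinuousOn.log
    · fun_prop
    · intro x hx
      rw [Set.uIcc_of_le (by linarith : a - 1 ≤ a + 1)] at hx
      obtain ⟨h1, h2⟩ := hx
      nlinarith
  have hInt2 : IntervalIntegrable (fun t => 2 * Real.log t) volume (a-1) (a+1) := by
    apply ContinuousOn.intervalIntegrable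
    apply ContinuousOn.mul continuousOn_const
    apply ContinuousOn.log continuousOn_id
    intro x hx
    rw [Set.uIcc_of_le (by linarith : a - 1 ≤ a + 1)] at hx
    obtain ⟨h1, h2⟩ := hx
    intro h; simp only [id_eq] at h; rw [h] at h1; linarith
  have hmul : (∫ t in (a-1)..(a+1), π * (Real.log (2*a*t - (a^2-1)) - 2 * Real.log t))
      = π * ((∫ t in (a-1)..(a+1), Real.log (2*a*t - (a^2-1)))
          - ∫ t in (a-1)..(a+1), 2 * Real.log t) := by
    rw [← intervalIntegral.integral_sub hInt1 hInt2, ← intervalIntegral.integral_const_mul]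
  rw [hmul, ftc2 a ha, intervalIntegral.integral_const_mul,
    integral_log]
  have hlog1 : Real.log ((a+1)^2) = 2 * Real.log (a+1) := by rw [Real.log_pow]; norm_num
  have hlog2 : Real.log ((a-1)^2) = 2 * Real.log (a-1) := by rw [Real.log_pow]; norm_num
  have hlogdiv : Real.log ((a+1)/(a-1)) = Real.log (a+1) - Real.log (a-1) :=
    Real.log_div (by linarith) (by linarith)
  rw [hlog1, hlog2, hlogdiv]
  have ha2 : a ≠ 0 := by linarith
  field_simp
  ring

theorem ball_integral_inv_sq (ξ : E3) (hξ : 1 < ‖ξ‖) (lam : ℝ) (hlam : 0 < lam) :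
    ∫ x in Metric.closedBall (lam • ξ) lam, (‖x‖ ^ 2)⁻¹
      = 2 * π * lam * (1 - ((‖ξ‖ ^ 2 - 1) / (2 * ‖ξ‖)) * Real.log ((‖ξ‖ + 1) / (‖ξ‖ - 1))) := by
  set a : ℝ := ‖ξ‖ with ha
  set e₀ : E3 := EuclideanSpace.single (0 : Fin 3) (1:ℝ) with he₀
  have hnorme₀ : ‖e₀‖ = 1 := by simp [he₀, EuclideanSpace.norm_single]
  have hnorm_eq : ‖ξ‖ = ‖a • e₀‖ := by
    rw [norm_smul, hnorme₀, Real.norm_eq_abs, abs_of_pos (by linarith), mul_one]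
  set T : E3 ≃ₗᵢ[ℝ] E3 := Submodule.reflection (ℝ ∙ (ξ - a • e₀))ᗮ with hT
  have hTξ : T ξ = a • e₀ := Submodule.reflection_sub hnorm_eq
  rw [← MeasureTheory.integral_indicator (measurableSet_closedBall)]
  have hmp := (T.symm.measurePreserving : MeasurePreserving _ (volume : Measure E3) volume)
  rw [← hmp.integral_comp T.symm.toHomeomorph.measurableEmbedding
    ((Metric.closedBall (lam • ξ) lam).indicator (fun x => (‖x‖^2)⁻¹))]
  have hrot : ∀ x : E3,
      (Metric.closedBall (lam • ξ) lam).indicator (fun x => (‖x‖^2)⁻¹) (T.symm x)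
      = (Metric.closedBall (lam • (a • e₀)) lam).indicator (fun x => (‖x‖^2)⁻¹) x := by
    intro x
    have hmem : T.symm x ∈ Metric.closedBall (lam • ξ) lam
        ↔ x ∈ Metric.closedBall (lam • (a • e₀)) lam := by
      rw [Metric.mem_closedBall, Metric.mem_closedBall, dist_eq_norm, dist_eq_norm]
      have : T.symm x - lam • ξ = T.symm (x - lam • (a • e₀)) := by
        rw [map_sub, _root_.map_smul, ← hTξ, LinearIsometryEquiv.symm_apply_apply]
      rw [this, LinearIsometryEquiv.norm_map]
    by_cases hx : x ∈ Metric.closedBall (lam • (a • e₀)) lam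
    · rw [Set.indicator_of_mem (hmem.2 hx), Set.indicator_of_mem hx,
        LinearIsometryEquiv.norm_map]
    · rw [Set.indicator_of_notMem (fun c => hx (hmem.1 c)), Set.indicator_of_notMem hx]
  simp_rw [hrot]
  have hscale : ∀ x : E3,
      (Metric.closedBall (lam • (a • e₀)) lam).indicator (fun x => (‖x‖^2)⁻¹) x
      = lam⁻¹^2 * (Metric.closedBall (a • e₀) 1).indicator (fun y => (‖y‖^2)⁻¹) (lam⁻¹ • x) := by
    intro x
    have hmem : x ∈ Metric.closedBall (lam • (a • e₀)) lam
        ↔ lam⁻¹ • x ∈ Metric.closedBall (a • e₀) 1 := by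
      rw [Metric.mem_closedBall, Metric.mem_closedBall, dist_eq_norm, dist_eq_norm]
      have h1 : lam⁻¹ • x - a • e₀ = lam⁻¹ • (x - lam • (a • e₀)) := by
        rw [smul_sub, smul_smul, inv_mul_cancel₀ hlam.ne', one_smul]
      rw [h1, norm_smul, Real.norm_eq_abs, abs_of_pos (inv_pos.2 hlam)]
      rw [← le_div_iff₀' (inv_pos.2 hlam), one_div, inv_inv]
    have hval : (‖x‖^2)⁻¹ = lam⁻¹^2 * (‖lam⁻¹ • x‖^2)⁻¹ := by
      rw [norm_smul, Real.norm_eq_abs, abs_of_pos (inv_pos.2 hlam), mul_pow, mul_inv,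
        inv_pow, inv_inv]
      rw [← mul_assoc, inv_mul_cancel₀ (by positivity : (lam:ℝ)^2 ≠ 0), one_mul]
    by_cases hx : x ∈ Metric.closedBall (lam • (a • e₀)) lam
    · rw [Set.indicator_of_mem hx, Set.indicator_of_mem (hmem.1 hx)]; exact hval
    · rw [Set.indicator_of_notMem hx, Set.indicator_of_notMem (fun c => hx (hmem.2 c)),
        mul_zero]
  simp_rw [hscale]
  rw [MeasureTheory.integral_const_mul, MeasureTheory.Measure.integral_comp_smul
    (μ := (volume : Measure E3))
    (f := (Metric.closedBall (a • e₀) 1).indicator (fun y => (‖y‖^2)⁻¹)) (R := lam⁻¹)]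
  rw [main1 a hξ]
  have h3 : Module.finrank ℝ E3 = 3 := finrank_euclideanSpace_fin
  rw [h3, smul_eq_mul]
  have : |((lam⁻¹ ^ 3)⁻¹)| = lam^3 := by
    rw [inv_pow, inv_inv, abs_of_pos (by positivity)]
  rw [this]
  have hl : lam ≠ 0 := hlam.ne'
  field_simp
end

section
/- Let G : [1,∞) → ℝ be continuously differentiable and K : [1,∞) → ℝ satisfy: K(s) ≥ 0 for all s ≥ 1, K(s) ≤ K(1)/s for all s ≥ 1, s G'(s) = G(s) + K(s) for all s ≥ 1, and G(s)/s + K(1)/(2s^2) → 0 as s → ∞. Then G'(1) ≥ 0. -/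
open Filter

theorem ode_comparison (G G' K : ℝ → ℝ)
    (hderiv : ∀ s : ℝ, 1 ≤ s → HasDerivAt G (G' s) s)
    (hcont : ContinuousOn G' (Set.Ici (1 : ℝ)))
    (hK0 : ∀ s : ℝ, 1 ≤ s → 0 ≤ K s)
    (hK1 : ∀ s : ℝ, 1 ≤ s → K s ≤ K 1 / s)
    (hode : ∀ s : ℝ, 1 ≤ s → s * G' s = G s + K s)
    (hlim : Tendsto (fun s : ℝ => G s / s + K 1 / (2 * s ^ 2)) atTop (nhds 0)) :
    0 ≤ G' 1 := by
  set F : ℝ → ℝ := fun s => G s / s + K 1 / (2 * s ^ 2) with hF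
  -- derivative of F for s ≥ 1
  have hFderiv : ∀ s : ℝ, 1 ≤ s →
      HasDerivAt F (K s / s ^ 2 - K 1 / s ^ 3) s := by
    intro s hs
    have hs0 : s ≠ 0 := by positivity
    have h1 : HasDerivAt (fun s : ℝ => G s / s)
        ((G' s * s - G s * 1) / s ^ 2) s :=
      (hderiv s hs).div (hasDerivAt_id s) hs0
    have h2 : HasDerivAt (fun s : ℝ => K 1 / (2 * s ^ 2))
        ((0 * (2 * s ^ 2) - K 1 * (2 * (2 * s))) / (2 * s ^ 2) ^ 2) s := by
      have : HasDerivAt (fun s : ℝ => 2 * s ^ 2) (2 * (2 * s)) s := by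
        simpa using ((hasDerivAt_pow 2 s).const_mul 2)
      exact (hasDerivAt_const s (K 1)).div this (by positivity)
    have := h1.add h2
    refine this.congr_deriv ?_
    have hode' := hode s hs
    have hGs : G' s = (G s + K s) / s := by
      field_simp at hode' ⊢; linarith
    rw [hGs]
    field_simp
    ring
  have hFcont : ContinuousOn F (Set.Ici (1 : ℝ)) := fun s hs =>
    ((hFderiv s hs).continuousAt).continuousWithinAt
  have hanti : AntitoneOn F (Set.Ici (1 : ℝ)) := by
    apply antitoneOn_of_deriv_nonpos (convex_Ici 1) hFcont
    · intro s hs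
      rw [interior_Ici] at hs
      exact (hFderiv s (le_of_lt hs)).differentiableAt.differentiableWithinAt
    intro s hs
    rw [interior_Ici] at hs
    have hs1 : (1 : ℝ) ≤ s := le_of_lt hs
    rw [(hFderiv s hs1).deriv]
    have hKs := hK1 s hs1
    have hs0 : (0 : ℝ) < s := by linarith
    have h1 : K s / s ^ 2 ≤ (K 1 / s) / s ^ 2 :=
      div_le_div_of_nonneg_right hKs (by positivity)
    have h2 : (K 1 / s) / s ^ 2 = K 1 / s ^ 3 := by
      rw [div_div]; ring_nf
    linarith [h1, h2 ▸ h1]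
  have hle : ∀ s : ℝ, 1 ≤ s → F s ≤ F 1 := fun s hs =>
    hanti (Set.self_mem_Ici) hs hs
  have h0 : (0 : ℝ) ≤ F 1 := by
    refine le_of_tendsto hlim ?_
    filter_upwards [eventually_ge_atTop (1 : ℝ)] with s hs using hle s hs
  have hF1 : F 1 = G 1 + K 1 / 2 := by simp [hF]
  have hode1 := hode 1 le_rfl
  have hK10 := hK0 1 le_rfl
  rw [hF1] at h0
  nlinarith
end

section
/- Let F : ℝ^3 \ B̄_1(0) → ℝ be given by F(ξ) = -14 + 16|ξ|^2 log((|ξ|^2-1)/|ξ|^2) + (15|ξ| - |ξ|^{-1}) log((|ξ|+1)/(|ξ|-1)) (i.e., the function F of the paper with T ≡ 0, up to the factor 2π). Then for every ξ with |ξ| > 1, the radial derivative satisfies (d/ds) F(sξ)|_{s=1} = 32|ξ|^2 log((|ξ|^2-1)/|ξ|^2) + (15|ξ| + |ξ|^{-1}) log((|ξ|+1)/(|ξ|-1)) + 2(|ξ|^2+1)/(|ξ|^2-1), and this quantity is strictly positive; in particular F has no critical points in {|ξ| > 1}. -/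
open Real

private lemma pos_on_Ioo {f f' : ℝ → ℝ} (hf0 : f 0 = 0)
    (hd : ∀ y ∈ Set.Ico (0:ℝ) 1, HasDerivAt f (f' y) y)
    (hp : ∀ y ∈ Set.Ioo (0:ℝ) 1, 0 < f' y) :
    ∀ y ∈ Set.Ioo (0:ℝ) 1, 0 < f y := by
  intro y hy
  have hmono : StrictMonoOn f (Set.Ico (0:ℝ) 1) := by
    refine strictMonoOn_of_deriv_pos (convex_Ico 0 1) ?_ ?_
    · exact fun z hz => (hd z hz).continuousAt.continuousWithinAt
    · intro z hz
      rw [interior_Ico] at hz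
      rw [(hd z ⟨hz.1.le, hz.2⟩).deriv]
      exact hp z hz
  have h01 : (0:ℝ) ∈ Set.Ico (0:ℝ) 1 := ⟨le_refl _, one_pos⟩
  have := hmono h01 ⟨hy.1.le, hy.2⟩ hy.1
  simpa [hf0] using this

private lemma hasDerivAt_L {y : ℝ} (h0 : -1 < y) (h1 : y < 1) :
    HasDerivAt (fun y => Real.log (1+y) - Real.log (1-y)) (1/(1+y) + 1/(1-y)) y := by
  have ha : HasDerivAt (fun y : ℝ => 1 + y) 1 y := by
    simpa using (hasDerivAt_id y).const_add 1
  have hb : HasDerivAt (fun y : ℝ => 1 - y) (-1) y := by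
    simpa using (hasDerivAt_id y).const_sub 1
  have hla := ha.log (by linarith)
  have hlb := hb.log (by linarith)
  refine (hla.sub hlb).congr_deriv ?_
  rw [div_add_div _ _ (by linarith : (1:ℝ)+y ≠ 0) (by linarith : (1:ℝ)-y ≠ 0), div_sub_div _ _ (by linarith : (1:ℝ)+y ≠ 0) (by linarith : (1:ℝ)-y ≠ 0)]
  ring_nf

private lemma step1 : ∀ y ∈ Set.Ioo (0:ℝ) 1,
    0 < Real.log (1+y) - Real.log (1-y) - 2*y := by
  apply pos_on_Ioo (f' := fun y => (1/(1+y) + 1/(1-y)) - 2)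
  · norm_num
  · intro y hy
    exact (hasDerivAt_L (by linarith [hy.1]) hy.2).sub
      (by simpa using (hasDerivAt_id y).const_mul 2)
  · intro y hy
    obtain ⟨h0, h1⟩ := hy
    have hne1 : (1:ℝ)+y ≠ 0 := by linarith
    have hne2 : (1:ℝ)-y ≠ 0 := by linarith
    have : (1/(1+y) + 1/(1-y)) - 2 = 2*y^2/((1+y)*(1-y)) := by
      field_simp; ring
    rw [this]
    have : 0 < (1+y)*(1-y) := by nlinarith
    positivity

private lemma step2 : ∀ y ∈ Set.Ioo (0:ℝ) 1,
    0 < 2*y*(3-y^2) - (3+y^2)*(1-y^2)*(Real.log (1+y) - Real.log (1-y)) := by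
  apply pos_on_Ioo (f' := fun y =>
    (2*(3-y^2) + 2*y*(-(2*y))) -
      ((2*y*(1-y^2) + (3+y^2)*(-(2*y))) * (Real.log (1+y) - Real.log (1-y))
        + (3+y^2)*(1-y^2)*(1/(1+y) + 1/(1-y))))
  · norm_num
  · intro y hy
    have h0 : -1 < y := by linarith [hy.1]
    have hL := hasDerivAt_L h0 hy.2
    have hp1 : HasDerivAt (fun y : ℝ => 2*y*(3-y^2)) (2*(3-y^2) + 2*y*(-(2*y))) y := by
      have ha : HasDerivAt (fun y : ℝ => 2*y) 2 y := by
        simpa using (hasDerivAt_id y).const_mul 2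
      have hb : HasDerivAt (fun y : ℝ => 3-y^2) (-(2*y)) y := by
        simpa using (hasDerivAt_pow 2 y).const_sub 3
      exact ha.mul hb
    have hq : HasDerivAt (fun y : ℝ => (3+y^2)*(1-y^2))
        (2*y*(1-y^2) + (3+y^2)*(-(2*y))) y := by
      have ha : HasDerivAt (fun y : ℝ => 3+y^2) (2*y) y := by
        simpa using (hasDerivAt_pow 2 y).const_add 3
      have hb : HasDerivAt (fun y : ℝ => 1-y^2) (-(2*y)) y := by
        simpa using (hasDerivAt_pow 2 y).const_sub 1
      exact ha.mul hb
    exact hp1.sub ((hq.mul hL))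
  · intro y hy
    obtain ⟨h0, h1⟩ := hy
    have hLgt := step1 y ⟨h0, h1⟩
    set L := Real.log (1+y) - Real.log (1-y) with hLdef
    have hne1 : (1:ℝ)+y ≠ 0 := by linarith
    have hne2 : (1:ℝ)-y ≠ 0 := by linarith
    have hred : (2*(3-y^2) + 2*y*(-(2*y))) -
      ((2*y*(1-y^2) + (3+y^2)*(-(2*y))) * L
        + (3+y^2)*(1-y^2)*(1/(1+y) + 1/(1-y))) = 4*y*(1+y^2)*L - 8*y^2 := by
      field_simp
      ring
    rw [hred]
    nlinarith [hLgt, sq_nonneg y, mul_pos h0 (mul_pos h0 h0)]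

private lemma step3 : ∀ y ∈ Set.Ioo (0:ℝ) 1,
    0 < (15+3*y^2)*(1-y^2)^2*(Real.log (1+y) - Real.log (1-y))
        - 30*y + 44*y^3 - 6*y^5 := by
  apply pos_on_Ioo (f' := fun y =>
    18*y*(2*y*(3-y^2) - (3+y^2)*(1-y^2)*(Real.log (1+y) - Real.log (1-y))))
  · norm_num
  · intro y hy
    have h0 : -1 < y := by linarith [hy.1]
    have hL := hasDerivAt_L h0 hy.2
    have hne2 : (1:ℝ)-y ≠ 0 := by have := hy.2; intro h; linarith
    have ha : HasDerivAt (fun y : ℝ => 15+3*y^2) (6*y) y := by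
      have := ((hasDerivAt_pow 2 y).const_mul 3).const_add 15
      refine this.congr_deriv ?_
      push_cast
      ring
    have hb : HasDerivAt (fun y : ℝ => (1-y^2)^2) (2*(1-y^2)*(-(2*y))) y := by
      have hb0 : HasDerivAt (fun y : ℝ => 1-y^2) (-(2*y)) y := by
        simpa using (hasDerivAt_pow 2 y).const_sub 1
      have := hb0.pow 2
      refine this.congr_deriv ?_
      push_cast
      ring
    have hA := ha.mul hb
    have hAL := hA.mul hL
    have h30 : HasDerivAt (fun y : ℝ => 30*y) 30 y := by
      simpa using (hasDerivAt_id y).const_mul 30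
    have h44 : HasDerivAt (fun y : ℝ => 44*y^3) (132*y^2) y := by
      have := (hasDerivAt_pow 3 y).const_mul 44
      refine this.congr_deriv ?_
      push_cast
      ring
    have h6 : HasDerivAt (fun y : ℝ => 6*y^5) (30*y^4) y := by
      have := (hasDerivAt_pow 5 y).const_mul 6
      refine this.congr_deriv ?_
      push_cast
      ring
    have := ((hAL.sub h30).add h44).sub h6
    refine this.congr_deriv ?_
    have hne1 : (1:ℝ)+y ≠ 0 := by linarith
    simp only [Pi.mul_apply]
    field_simp
    ring
  · intro y hy
    have h2 := step2 y hy
    have h0 := hy.1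
    positivity

private lemma step4 : ∀ y ∈ Set.Ioo (0:ℝ) 1,
    0 < 32*Real.log (1-y^2) + (15*y+y^3)*(Real.log (1+y) - Real.log (1-y))
        + 2*y^2*(1+y^2)/(1-y^2) := by
  apply pos_on_Ioo (f' := fun y =>
    ((15+3*y^2)*(1-y^2)^2*(Real.log (1+y) - Real.log (1-y))
        - 30*y + 44*y^3 - 6*y^5) / (1-y^2)^2)
  · norm_num
  · intro y hy
    have h0 : -1 < y := by linarith [hy.1]
    have h1 := hy.2
    have hne1 : (1:ℝ)+y ≠ 0 := by linarith
    have hne2 : (1:ℝ)-y ≠ 0 := by intro h; linarith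
    have hneq : (1:ℝ)-y^2 ≠ 0 := by
      intro h
      have : (1-y)*(1+y) = 0 := by nlinarith
      rcases mul_eq_zero.mp this with h' | h' <;> [exact hne2 h'; exact hne1 h']
    have hL := hasDerivAt_L h0 h1
    have hb0 : HasDerivAt (fun y : ℝ => 1-y^2) (-(2*y)) y := by
      simpa using (hasDerivAt_pow 2 y).const_sub 1
    have hlog : HasDerivAt (fun y : ℝ => Real.log (1-y^2)) (-(2*y)/(1-y^2)) y :=
      hb0.log hneq
    have h32 := hlog.const_mul 32
    have hc : HasDerivAt (fun y : ℝ => 15*y+y^3) (15+3*y^2) y := by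
      have := ((hasDerivAt_id y).const_mul 15).add (hasDerivAt_pow 3 y)
      refine this.congr_deriv ?_
      push_cast
      ring
    have hcl := hc.mul hL
    have hnum : HasDerivAt (fun y : ℝ => 2*y^2*(1+y^2)) (4*y*(1+y^2) + 2*y^2*(2*y)) y := by
      have ha' : HasDerivAt (fun y : ℝ => 2*y^2) (4*y) y := by
        have := (hasDerivAt_pow 2 y).const_mul 2
        refine this.congr_deriv ?_
        norm_num
        ring
      have hb' : HasDerivAt (fun y : ℝ => 1+y^2) (2*y) y := by
        simpa using (hasDerivAt_pow 2 y).const_add 1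
      exact ha'.mul hb'
    have hdiv := hnum.div hb0 hneq
    have := (h32.add hcl).add hdiv
    refine this.congr_deriv ?_
    field_simp
    ring
  · intro y hy
    have h3 := step3 y hy
    have hne : (0:ℝ) < (1-y^2)^2 := by
      have h1 := hy.2
      have h0 := hy.1
      have : (0:ℝ) < 1-y^2 := by nlinarith
      positivity
    exact div_pos h3 hne

private lemma Dpos {r : ℝ} (hr : 1 < r) :
    0 < 32 * r ^ 2 * Real.log ((r ^ 2 - 1) / r ^ 2)
        + (15 * r + r⁻¹) * Real.log ((r + 1) / (r - 1))
        + 2 * (r ^ 2 + 1) / (r ^ 2 - 1) := by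
  have hr0 : (0:ℝ) < r := by linarith
  have hrne : r ≠ 0 := ne_of_gt hr0
  have hy0 : (0:ℝ) < r⁻¹ := inv_pos.mpr hr0
  have hy1 : r⁻¹ < 1 := by
    rw [inv_lt_one_iff₀]
    right; exact hr
  have hG := step4 r⁻¹ ⟨hy0, hy1⟩
  have e1 : Real.log ((r ^ 2 - 1) / r ^ 2) = Real.log (1 - r⁻¹^2) := by
    congr 1
    field_simp
  have e2 : Real.log ((r + 1) / (r - 1)) = Real.log (1 + r⁻¹) - Real.log (1 - r⁻¹) := by
    rw [← Real.log_div (by positivity) (by intro h; have : r⁻¹ < 1 := hy1; linarith)]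
    congr 1
    rw [div_eq_div_iff (by intro h; linarith : r - 1 ≠ 0) (by intro h; nlinarith [hy1] : (1:ℝ) - r⁻¹ ≠ 0)]
    field_simp
  rw [e1, e2]
  have key : 32 * r ^ 2 * Real.log (1 - r⁻¹^2)
        + (15 * r + r⁻¹) * (Real.log (1 + r⁻¹) - Real.log (1 - r⁻¹))
        + 2 * (r ^ 2 + 1) / (r ^ 2 - 1)
      = r^2 * (32*Real.log (1-r⁻¹^2) + (15*r⁻¹+r⁻¹^3)*(Real.log (1+r⁻¹) - Real.log (1-r⁻¹))
          + 2*r⁻¹^2*(1+r⁻¹^2)/(1-r⁻¹^2)) := by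
    have h1 : r^2 - 1 ≠ 0 := by nlinarith
    have h2 : 1 - r⁻¹^2 ≠ 0 := by
      intro h
      apply h1
      have : r⁻¹^2 = 1 := by linarith
      have : r^2 = 1 := by
        field_simp at this
        nlinarith [this]
      linarith
    field_simp
  rw [key]
  exact mul_pos (by positivity) hG

theorem radial_derivative_of_F (F : E3 → ℝ)
    (hF : ∀ ξ : E3, 1 < ‖ξ‖ → F ξ =
      -14 + 16 * ‖ξ‖ ^ 2 * Real.log ((‖ξ‖ ^ 2 - 1) / ‖ξ‖ ^ 2)
        + (15 * ‖ξ‖ - ‖ξ‖⁻¹) * Real.log ((‖ξ‖ + 1) / (‖ξ‖ - 1)))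
    (ξ : E3) (hξ : 1 < ‖ξ‖) :
    HasDerivAt (fun s : ℝ => F (s • ξ))
        (32 * ‖ξ‖ ^ 2 * Real.log ((‖ξ‖ ^ 2 - 1) / ‖ξ‖ ^ 2)
          + (15 * ‖ξ‖ + ‖ξ‖⁻¹) * Real.log ((‖ξ‖ + 1) / (‖ξ‖ - 1))
          + 2 * (‖ξ‖ ^ 2 + 1) / (‖ξ‖ ^ 2 - 1)) 1
      ∧ 0 < 32 * ‖ξ‖ ^ 2 * Real.log ((‖ξ‖ ^ 2 - 1) / ‖ξ‖ ^ 2)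
          + (15 * ‖ξ‖ + ‖ξ‖⁻¹) * Real.log ((‖ξ‖ + 1) / (‖ξ‖ - 1))
          + 2 * (‖ξ‖ ^ 2 + 1) / (‖ξ‖ ^ 2 - 1)
      ∧ fderiv ℝ F ξ ≠ 0 := by
  set r : ℝ := ‖ξ‖ with hrdef
  have hr0 : (0:ℝ) < r := lt_trans one_pos hξ
  have hrne : r ≠ 0 := ne_of_gt hr0
  have hr1 : r - 1 ≠ 0 := by intro h; have := sub_eq_zero.mp h; simp_all
  have hrp1 : r + 1 ≠ 0 := by positivity
  have hr2 : r^2 - 1 ≠ 0 := by nlinarith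
  have hr2' : r^2 ≠ 0 := by positivity
  -- derivative of the explicit radial function
  have hu : HasDerivAt (fun s : ℝ => s*r) r 1 := by
    simpa using (hasDerivAt_id (1:ℝ)).mul_const r
  have hsq := hu.pow 2
  have hlog1 := (hsq.sub_const 1).log (by simp only [Pi.pow_apply, one_mul]; exact hr2)
  have hlog2 := hsq.log (by simp only [Pi.pow_apply, one_mul]; exact hr2')
  have h16 := hsq.const_mul 16
  have hT1 := h16.mul (hlog1.sub hlog2)
  have h15 := hu.const_mul 15
  have hinv := hu.inv (by simpa using hrne)
  have hlog3 := (hu.add_const 1).log (by simp only [one_mul]; exact hrp1)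
  have hlog4 := (hu.sub_const 1).log (by simp only [one_mul]; exact hr1)
  have hT2 := (h15.sub hinv).mul (hlog3.sub hlog4)
  have hg := (hT1.const_add (-14)).add hT2
  simp only [one_mul, pow_one, Nat.cast_ofNat, Pi.mul_apply, Pi.sub_apply, Pi.pow_apply, Pi.inv_apply, Pi.add_apply] at hg
  -- eventual equality with F (s • ξ)
  have hinvlt : r⁻¹ < 1 := by rw [inv_lt_one_iff₀]; right; exact hξ
  have heq : (fun s : ℝ => F (s • ξ)) =ᶠ[nhds 1]
      (fun s : ℝ => -14 + 16*(s*r)^2 * (Real.log ((s*r)^2-1) - Real.log ((s*r)^2))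
        + (15*(s*r) - (s*r)⁻¹) * (Real.log (s*r+1) - Real.log (s*r-1))) := by
    filter_upwards [Ioi_mem_nhds hinvlt] with s hs
    have hs0 : 0 < s := lt_trans (inv_pos.mpr hr0) hs
    have hsr : 1 < s * r := by
      have := mul_lt_mul_of_pos_right hs hr0
      rwa [inv_mul_cancel₀ hrne] at this
    have hnorm : ‖s • ξ‖ = s * r := by
      rw [norm_smul, Real.norm_eq_abs, abs_of_pos hs0]
    rw [hF (s • ξ) (by rw [hnorm]; exact hsr), hnorm]
    rw [Real.log_div (by nlinarith) (by nlinarith), Real.log_div (by nlinarith) (by nlinarith)]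
  have hmain : HasDerivAt (fun s : ℝ => F (s • ξ))
      (32 * r ^ 2 * Real.log ((r ^ 2 - 1) / r ^ 2)
        + (15 * r + r⁻¹) * Real.log ((r + 1) / (r - 1))
        + 2 * (r ^ 2 + 1) / (r ^ 2 - 1)) 1 := by
    have h := hg.congr_of_eventuallyEq heq
    refine h.congr_deriv ?_
    rw [Real.log_div hr2 hr2', Real.log_div hrp1 hr1]
    field_simp
    ring
  refine ⟨hmain, Dpos hξ, ?_⟩
  -- differentiability of F at ξ
  have hopen : IsOpen {η : E3 | 1 < ‖η‖} := isOpen_lt continuous_const continuous_norm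
  have hFeq : F =ᶠ[nhds ξ] (fun η : E3 =>
      -14 + 16 * ‖η‖ ^ 2 * (Real.log (‖η‖ ^ 2 - 1) - Real.log (‖η‖ ^ 2))
        + (15 * ‖η‖ - ‖η‖⁻¹) * (Real.log (‖η‖ + 1) - Real.log (‖η‖ - 1))) := by
    filter_upwards [hopen.mem_nhds hξ] with η hη
    rw [hF η hη, Real.log_div (by nlinarith) (by nlinarith), Real.log_div (by nlinarith) (by nlinarith)]
  have hn : DifferentiableAt ℝ (fun η : E3 => ‖η‖) ξ := by
    have hid : DifferentiableAt ℝ (fun η : E3 => η) ξ := differentiableAt_id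
    refine hid.norm ℝ ?_
    intro h
    rw [hrdef, h, norm_zero] at hξ
    linarith
  have hn2 : DifferentiableAt ℝ (fun η : E3 => ‖η‖^2) ξ := hn.pow 2
  have hdiffΦ : DifferentiableAt ℝ (fun η : E3 =>
      -14 + 16 * ‖η‖ ^ 2 * (Real.log (‖η‖ ^ 2 - 1) - Real.log (‖η‖ ^ 2))
        + (15 * ‖η‖ - ‖η‖⁻¹) * (Real.log (‖η‖ + 1) - Real.log (‖η‖ - 1))) ξ := by
    have hlogA : DifferentiableAt ℝ (fun η : E3 => Real.log (‖η‖^2-1) - Real.log (‖η‖^2)) ξ :=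
      ((hn2.sub_const 1).log hr2).sub (hn2.log hr2')
    have hlogB : DifferentiableAt ℝ (fun η : E3 => Real.log (‖η‖+1) - Real.log (‖η‖-1)) ξ :=
      ((hn.add_const 1).log hrp1).sub ((hn.sub_const 1).log hr1)
    exact (((hn2.const_mul 16).mul hlogA).const_add (-14)).add
      (((hn.const_mul 15).sub (hn.inv hrne)).mul hlogB)
  have hdiffF : DifferentiableAt ℝ F ξ := hFeq.differentiableAt_iff.mpr hdiffΦ
  have hsm : HasDerivAt (fun s : ℝ => s • ξ) ξ 1 := by
    simpa using (hasDerivAt_id (1:ℝ)).smul_const ξ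
  have hF' : HasFDerivAt F (fderiv ℝ F ξ) ((1:ℝ) • ξ) := by
    rw [one_smul]; exact hdiffF.hasFDerivAt
  have hchain : HasDerivAt (fun s : ℝ => F (s • ξ)) (fderiv ℝ F ξ ξ) 1 :=
    hF'.comp_hasDerivAt 1 hsm
  have huniq := hchain.unique hmain
  intro h0
  rw [h0] at huniq
  simp only [ContinuousLinearMap.zero_apply] at huniq
  have := Dpos hξ
  rw [← huniq] at this
  exact lt_irrefl 0 this
end
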